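/- arXiv:2411.01294 — 2 statements merged into one kernel-verified Lean document; each statement's English description precedes it below -/
import Mathlib

section
/- Let A be an m×n dual complex matrix and N_A an NDMPI of A. If X is an n×m dual complex matrix satisfying A·X·A = A·N_A·A, X·A·X = X, and (X·A)* = X·A (i.e., X is a {1,2,4}-inverse of A), then X·A = N_A·A. -/
open Matrix

/-- The dual complex numbers ℂ[ε] with ε² = 0 (dual numbers over ℂ). -/
abbrev DualComplex := DualNumber ℂ

/-- Conjugation on dual complex numbers: star (a + b·ε) = (conj a) + (conj b)·ε. -/
noncomputable instance : StarRing DualComplex where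
  star x := ⟨star x.fst, star x.snd⟩
  star_involutive x := TrivSqZeroExt.ext (star_star x.fst) (star_star x.snd)
  star_mul x y := TrivSqZeroExt.ext
    (show star (x * y).fst = star y.fst * star x.fst by simp [TrivSqZeroExt.fst_mul, mul_comm])
    (show star (x * y).snd = star y.fst * star x.snd + star y.snd * star x.fst by
      simp [TrivSqZeroExt.snd_mul]; ring)
  star_add x y := TrivSqZeroExt.ext (show star (x + y).fst = star x.fst + star y.fst by simp)
    (show star (x + y).snd = star x.snd + star y.snd by simp)

/-- `X` is a new dual Moore–Penrose inverse (NDMPI) of `M`: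
`M*·M·X·M·M* = M*·M·M*`, `X·M·X = X`, `(M·X)* = M·X`, `(X·M)* = X·M`. -/
def IsNDMPI {m n : ℕ} (M : Matrix (Fin m) (Fin n) DualComplex)
    (X : Matrix (Fin n) (Fin m) DualComplex) : Prop :=
  Mᴴ * M * X * M * Mᴴ = Mᴴ * M * Mᴴ ∧
  X * M * X = X ∧
  (M * X)ᴴ = M * X ∧
  (X * M)ᴴ = X * M

/-- If `X` is a {1,2,4}-inverse of `A` (i.e. `A·X·A = A_e`, `X·A·X = X`,
`(X·A)* = X·A`), then `X·A = N_A·A`. -/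
theorem stmt_13 {m n : ℕ} (A : Matrix (Fin m) (Fin n) DualComplex)
    (NA : Matrix (Fin n) (Fin m) DualComplex) (hNA : IsNDMPI A NA)
    (X : Matrix (Fin n) (Fin m) DualComplex)
    (h1 : A * X * A = A * NA * A)
    (h2 : X * A * X = X)
    (h4 : (X * A)ᴴ = X * A) :
    X * A = NA * A := by
  obtain ⟨-, hN2, -, hP⟩ := hNA
  have e1 : X * A * (NA * A) = X * A := by
    calc X * A * (NA * A) = X * (A * NA * A) := by simp only [Matrix.mul_assoc]
      _ = X * (A * X * A) := by rw [h1]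
      _ = X * A * X * A := by simp only [Matrix.mul_assoc]
      _ = X * A := by rw [h2]
  have e2 : NA * A * (X * A) = NA * A := by
    calc NA * A * (X * A) = NA * (A * X * A) := by simp only [Matrix.mul_assoc]
      _ = NA * (A * NA * A) := by rw [h1]
      _ = NA * A * NA * A := by simp only [Matrix.mul_assoc]
      _ = NA * A := by rw [hN2]
  calc X * A = X * A * (NA * A) := e1.symm
    _ = (X * A)ᴴ * (NA * A)ᴴ := by rw [h4, hP]
    _ = (NA * A * (X * A))ᴴ := (conjTranspose_mul _ _).symm
    _ = (NA * A)ᴴ := by rw [e2]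
    _ = NA * A := hP
end

section
/- (Existence of the NDMPI) Every m×n dual complex matrix A admits an NDMPI: there exists an n×m dual complex matrix X satisfying A*·A·X·A·A* = A*·A·A*, X·A·X = X, (A·X)* = A·X, and (X·A)* = X·A. -/
open Matrix

lemma herm_pinv {k : ℕ} (H : Matrix (Fin k) (Fin k) ℂ) (hH : H.IsHermitian) :
    ∃ G : Matrix (Fin k) (Fin k) ℂ, Gᴴ = G ∧ H * G = G * H ∧ H * G * H = H ∧ G * H * G = G := by
  classical
  set U : Matrix (Fin k) (Fin k) ℂ := (hH.eigenvectorUnitary : Matrix (Fin k) (Fin k) ℂ) with hU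
  have hUU : star U * U = 1 := (Matrix.mem_unitaryGroup_iff').mp hH.eigenvectorUnitary.2
  have hUU' : U * star U = 1 := (Matrix.mem_unitaryGroup_iff).mp hH.eigenvectorUnitary.2
  set d : Fin k → ℂ := fun i => (hH.eigenvalues i : ℂ) with hd
  have hspec : H = U * diagonal d * star U := hH.spectral_theorem
  refine ⟨U * diagonal (fun i => (d i)⁻¹) * star U, ?_, ?_, ?_, ?_⟩
  · rw [conjTranspose_mul, conjTranspose_mul, diagonal_conjTranspose]
    have : (star fun i => (d i)⁻¹) = fun i => (d i)⁻¹ := by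
      funext i
      simp [hd, ← Complex.ofReal_inv]
    rw [this]
    simp [Matrix.star_eq_conjTranspose, Matrix.mul_assoc]
  · rw [hspec]
    have h1 : ∀ D₁ D₂ : Matrix (Fin k) (Fin k) ℂ,
        (U * D₁ * star U) * (U * D₂ * star U) = U * (D₁ * D₂) * star U := by
      intro D₁ D₂
      calc (U * D₁ * star U) * (U * D₂ * star U)
          = U * D₁ * (star U * U) * D₂ * star U := by
            simp only [Matrix.mul_assoc]
        _ = U * (D₁ * D₂) * star U := by rw [hUU]; simp only [Matrix.mul_one, Matrix.mul_assoc]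
    rw [h1, h1, diagonal_mul_diagonal, diagonal_mul_diagonal]
    have : (fun i => d i * (d i)⁻¹) = fun i => (d i)⁻¹ * d i := by
      funext i; exact mul_comm _ _
    rw [this]
  · rw [hspec]
    have : (U * diagonal d * star U) * (U * diagonal (fun i => (d i)⁻¹) * star U) *
        (U * diagonal d * star U) = U * (diagonal d * diagonal (fun i => (d i)⁻¹) * diagonal d) * star U := by
      calc (U * diagonal d * star U) * (U * diagonal (fun i => (d i)⁻¹) * star U) *
          (U * diagonal d * star U)
          = U * diagonal d * (star U * U) * diagonal (fun i => (d i)⁻¹) * (star U * U) *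
            diagonal d * star U := by simp only [Matrix.mul_assoc]
        _ = _ := by rw [hUU]; simp only [Matrix.mul_one, Matrix.mul_assoc]
    rw [this, diagonal_mul_diagonal, diagonal_mul_diagonal]
    have : (fun i => d i * (d i)⁻¹ * d i) = d := by
      funext i
      rcases eq_or_ne (d i) 0 with h | h
      · simp [h]
      · field_simp
    rw [this]
  · have : (U * diagonal (fun i => (d i)⁻¹) * star U) * (U * diagonal d * star U) *
        (U * diagonal (fun i => (d i)⁻¹) * star U) =
        U * (diagonal (fun i => (d i)⁻¹) * diagonal d * diagonal (fun i => (d i)⁻¹)) * star U := by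
      calc _ = U * diagonal (fun i => (d i)⁻¹) * (star U * U) * diagonal d * (star U * U) *
            diagonal (fun i => (d i)⁻¹) * star U := by simp only [Matrix.mul_assoc]
        _ = _ := by rw [hUU]; simp only [Matrix.mul_one, Matrix.mul_assoc]
    rw [hspec, this, diagonal_mul_diagonal, diagonal_mul_diagonal]
    have : (fun i => (d i)⁻¹ * d i * (d i)⁻¹) = fun i => (d i)⁻¹ := by
      funext i
      rcases eq_or_ne (d i) 0 with h | h
      · simp [h]
      · field_simp
    rw [this]

/-- Moore–Penrose inverse of a complex matrix. -/
lemma mp_inv {m n : ℕ} (B : Matrix (Fin m) (Fin n) ℂ) :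
    ∃ P : Matrix (Fin n) (Fin m) ℂ,
      B * P * B = B ∧ P * B * P = P ∧ (B * P)ᴴ = B * P ∧ (P * B)ᴴ = P * B := by
  classical
  set H : Matrix (Fin n) (Fin n) ℂ := Bᴴ * B with hHdef
  have hH : H.IsHermitian := isHermitian_conjTranspose_mul_self B
  obtain ⟨G, hGH, hcomm, hHGH, hGHG⟩ := herm_pinv H hH
  have key : B * (G * H) = B := by
    have e1 : (B - B * (G * H))ᴴ = Bᴴ - H * G * Bᴴ := by
      rw [conjTranspose_sub, conjTranspose_mul, conjTranspose_mul, hGH, hH.eq]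
    have e2 : Bᴴ * (B * (G * H)) = H * G * H := by
      simp only [hHdef, Matrix.mul_assoc]
    have e3 : H * G * Bᴴ * B = H * G * H := by
      simp only [hHdef, Matrix.mul_assoc]
    have e4 : H * G * Bᴴ * (B * (G * H)) = H * G * H := by
      have ha : H * G * Bᴴ * (B * (G * H)) = H * G * (Bᴴ * (B * (G * H))) := by
        simp only [Matrix.mul_assoc]
      rw [ha, e2, hHGH]
      exact hHGH
    have h0 : (B - B * (G * H))ᴴ * (B - B * (G * H)) = 0 := by
      rw [e1, Matrix.sub_mul, Matrix.mul_sub, Matrix.mul_sub, e2, e3, e4]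
      simp only [hHGH]
      simp [← hHdef]
    open ComplexOrder in
    have h1 : B - B * (G * H) = 0 := conjTranspose_mul_self_eq_zero.mp h0
    exact (sub_eq_zero.mp h1).symm
  have key' : B * G * H = B := by rw [Matrix.mul_assoc]; exact key
  refine ⟨G * Bᴴ, ?_, ?_, ?_, ?_⟩
  · calc B * (G * Bᴴ) * B = B * G * H := by rw [hHdef]; simp only [Matrix.mul_assoc]
      _ = B := key'
  · calc G * Bᴴ * B * (G * Bᴴ) = G * (H * G) * Bᴴ := by rw [hHdef]; simp only [Matrix.mul_assoc]
      _ = G * H * G * Bᴴ := by simp only [Matrix.mul_assoc]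
      _ = G * Bᴴ := by rw [hGHG]
  · simp only [conjTranspose_mul, conjTranspose_conjTranspose, hGH, Matrix.mul_assoc]
  · calc (G * Bᴴ * B)ᴴ = (G * H)ᴴ := by rw [hHdef, Matrix.mul_assoc]
      _ = H * G := by rw [conjTranspose_mul, hGH, hH.eq]
      _ = G * H := hcomm
      _ = G * Bᴴ * B := by rw [hHdef, Matrix.mul_assoc]

section eps

/-- A dual complex matrix is "epsilon" if all its entries have zero standard part. -/
def EpsM {a b : ℕ} (M : Matrix (Fin a) (Fin b) DualComplex) : Prop :=
  ∀ i j, (M i j).fst = 0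

lemma epsM_mul_left {a b c : ℕ} (M : Matrix (Fin a) (Fin b) DualComplex)
    {N : Matrix (Fin b) (Fin c) DualComplex} (h : EpsM N) : EpsM (M * N) := by
  intro i j
  rw [Matrix.mul_apply, TrivSqZeroExt.fst_sum]
  simp [TrivSqZeroExt.fst_mul, h _ _]

lemma epsM_mul_right {a b c : ℕ} {M : Matrix (Fin a) (Fin b) DualComplex}
    (h : EpsM M) (N : Matrix (Fin b) (Fin c) DualComplex) : EpsM (M * N) := by
  intro i j
  rw [Matrix.mul_apply, TrivSqZeroExt.fst_sum]
  simp [TrivSqZeroExt.fst_mul, h _ _]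

lemma epsM_add {a b : ℕ} {M N : Matrix (Fin a) (Fin b) DualComplex}
    (hM : EpsM M) (hN : EpsM N) : EpsM (M + N) := by
  intro i j
  show ((M i j) + (N i j)).fst = 0
  rw [TrivSqZeroExt.fst_add, hM, hN, add_zero]

lemma epsM_sub {a b : ℕ} {M N : Matrix (Fin a) (Fin b) DualComplex}
    (hM : EpsM M) (hN : EpsM N) : EpsM (M - N) := by
  intro i j
  show ((M i j) - (N i j)).fst = 0
  rw [TrivSqZeroExt.fst_sub, hM, hN, sub_zero]

lemma epsM_neg {a b : ℕ} {M : Matrix (Fin a) (Fin b) DualComplex}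
    (hM : EpsM M) : EpsM (-M) := by
  intro i j
  show (-(M i j)).fst = 0
  rw [TrivSqZeroExt.fst_neg, hM, neg_zero]

lemma fst_star_dc (x : DualComplex) : (star x).fst = star x.fst := rfl

lemma epsM_conjTranspose {a b : ℕ} {M : Matrix (Fin a) (Fin b) DualComplex}
    (hM : EpsM M) : EpsM Mᴴ := by
  intro i j
  rw [Matrix.conjTranspose_apply, fst_star_dc, hM, star_zero]

lemma epsM_mul_epsM {a b c : ℕ} {M : Matrix (Fin a) (Fin b) DualComplex}
    {N : Matrix (Fin b) (Fin c) DualComplex} (hM : EpsM M) (hN : EpsM N) :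
    M * N = 0 := by
  apply Matrix.ext
  intro i j
  rw [Matrix.mul_apply, Matrix.zero_apply]
  apply Finset.sum_eq_zero
  intro k _
  have h1 := hM i k
  have h2 := hN k j
  apply TrivSqZeroExt.ext
  · rw [TrivSqZeroExt.fst_mul, h1, zero_mul, TrivSqZeroExt.fst_zero]
  · rw [TrivSqZeroExt.snd_mul, h1, h2]
    simp

end eps

lemma snd_star_dc (x : DualComplex) : (star x).snd = star x.snd := rfl

set_option maxHeartbeats 1600000 in
/-- Existence of the NDMPI: every dual complex matrix admits an NDMPI. -/
theorem stmt_19 {m n : ℕ} (A : Matrix (Fin m) (Fin n) DualComplex) :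
    ∃ X : Matrix (Fin n) (Fin m) DualComplex, IsNDMPI A X := by
  classical
  set ι : ℂ →+* DualComplex := TrivSqZeroExt.inlHom ℂ ℂ with hι
  have hstar : Function.Semiconj (⇑ι) star star := by
    intro a
    apply TrivSqZeroExt.ext
    · rw [fst_star_dc]
      simp [hι, TrivSqZeroExt.inlHom]
    · rw [snd_star_dc]
      simp [hι, TrivSqZeroExt.inlHom]
  set B0 : Matrix (Fin m) (Fin n) ℂ := Matrix.of (fun i j => (A i j).fst) with hB0
  obtain ⟨P0, m1, m2, m3, m4⟩ := mp_inv B0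
  set B : Matrix (Fin m) (Fin n) DualComplex := B0.map ι with hB
  set P : Matrix (Fin n) (Fin m) DualComplex := P0.map ι with hP
  have hBPB : B * P * B = B := by
    rw [hB, hP, ← Matrix.map_mul, ← Matrix.map_mul, m1]
  have hPBP : P * B * P = P := by
    rw [hB, hP, ← Matrix.map_mul, ← Matrix.map_mul, m2]
  have hBPh : (B * P)ᴴ = B * P := by
    rw [hB, hP, ← Matrix.map_mul, ← Matrix.conjTranspose_map (⇑ι) hstar, m3]
  have hPBh : (P * B)ᴴ = P * B := by
    rw [hB, hP, ← Matrix.map_mul, ← Matrix.conjTranspose_map (⇑ι) hstar, m4]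
  -- absorption rules
  have r1t : B * (P * B) = B := by rw [← Matrix.mul_assoc]; exact hBPB
  have r2t : P * (B * P) = P := by rw [← Matrix.mul_assoc]; exact hPBP
  have r1c : ∀ {k : ℕ} (M : Matrix (Fin n) (Fin k) DualComplex),
      B * (P * (B * M)) = B * M := by
    intro k M
    rw [show B * (P * (B * M)) = (B * P * B) * M by simp only [Matrix.mul_assoc], hBPB]
  have r2c : ∀ {k : ℕ} (M : Matrix (Fin m) (Fin k) DualComplex),
      P * (B * (P * M)) = P * M := by
    intro k M
    rw [show P * (B * (P * M)) = (P * B * P) * M by simp only [Matrix.mul_assoc], hPBP]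
  have r3t : B * (P * Pᴴ) = Pᴴ := by
    calc B * (P * Pᴴ) = (B * P) * Pᴴ := by rw [Matrix.mul_assoc]
      _ = (B * P)ᴴ * Pᴴ := by rw [hBPh]
      _ = (P * (B * P))ᴴ := by rw [← Matrix.conjTranspose_mul]
      _ = (P * B * P)ᴴ := by rw [Matrix.mul_assoc]
      _ = Pᴴ := by rw [hPBP]
  have r3c : ∀ {k : ℕ} (M : Matrix (Fin n) (Fin k) DualComplex),
      B * (P * (Pᴴ * M)) = Pᴴ * M := by
    intro k M
    rw [show B * (P * (Pᴴ * M)) = (B * (P * Pᴴ)) * M by simp only [Matrix.mul_assoc], r3t]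
  have r4t : Pᴴ * (P * B) = Pᴴ := by
    calc Pᴴ * (P * B) = Pᴴ * (P * B)ᴴ := by rw [hPBh]
      _ = ((P * B) * P)ᴴ := by rw [← Matrix.conjTranspose_mul]
      _ = Pᴴ := by rw [hPBP]
  have r6t : P * (B * Bᴴ) = Bᴴ := by
    calc P * (B * Bᴴ) = (P * B) * Bᴴ := by rw [Matrix.mul_assoc]
      _ = (P * B)ᴴ * Bᴴ := by rw [hPBh]
      _ = (B * (P * B))ᴴ := by rw [← Matrix.conjTranspose_mul]
      _ = (B * P * B)ᴴ := by rw [Matrix.mul_assoc]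
      _ = Bᴴ := by rw [hBPB]
  have l3' : Pᴴ * Bᴴ = B * P := by rw [← Matrix.conjTranspose_mul]; exact hBPh
  have l4' : Bᴴ * Pᴴ = P * B := by rw [← Matrix.conjTranspose_mul]; exact hPBh
  have l3c : ∀ {k : ℕ} (M : Matrix (Fin m) (Fin k) DualComplex),
      Pᴴ * (Bᴴ * M) = B * (P * M) := by
    intro k M
    rw [show Pᴴ * (Bᴴ * M) = (Pᴴ * Bᴴ) * M by simp only [Matrix.mul_assoc], l3',
      Matrix.mul_assoc]
  have l4c : ∀ {k : ℕ} (M : Matrix (Fin n) (Fin k) DualComplex),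
      Bᴴ * (Pᴴ * M) = P * (B * M) := by
    intro k M
    rw [show Bᴴ * (Pᴴ * M) = (Bᴴ * Pᴴ) * M by simp only [Matrix.mul_assoc], l4',
      Matrix.mul_assoc]
  -- the epsilon part
  set E : Matrix (Fin m) (Fin n) DualComplex := A - B with hEdef
  have hE : EpsM E := by
    intro i j
    rw [hEdef]
    show ((A i j) - (B i j)).fst = 0
    rw [TrivSqZeroExt.fst_sub, hB, Matrix.map_apply]
    simp [hι, TrivSqZeroExt.inlHom, hB0]
  have hEh : EpsM Eᴴ := epsM_conjTranspose hE
  have hA : A = B + E := by rw [hEdef]; abel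
  set F : Matrix (Fin n) (Fin m) DualComplex :=
    Eᴴ * (Pᴴ * P) + P * (Pᴴ * Eᴴ) - P * (E * P) - P * (B * (Eᴴ * (Pᴴ * P)))
      - P * (Pᴴ * (Eᴴ * (B * P))) with hFdef
  have hF : EpsM F := by
    rw [hFdef]
    exact epsM_sub (epsM_sub (epsM_sub
      (epsM_add (epsM_mul_right hEh _) (epsM_mul_left _ (epsM_mul_left _ hEh)))
      (epsM_mul_left _ (epsM_mul_right hE _)))
      (epsM_mul_left _ (epsM_mul_left _ (epsM_mul_right hEh _))))
      (epsM_mul_left _ (epsM_mul_left _ (epsM_mul_right hEh _)))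
  -- zero products
  have z1 : E * F = 0 := epsM_mul_epsM hE hF
  have z2 : F * E = 0 := epsM_mul_epsM hF hE
  have z3 : Eᴴ * (Pᴴ * F) = 0 := epsM_mul_epsM hEh (epsM_mul_left _ hF)
  have z4 : E * (P * (B * F)) = 0 :=
    epsM_mul_epsM hE (epsM_mul_left _ (epsM_mul_left _ hF))
  have z5 : E * (P * E) = 0 := epsM_mul_epsM hE (epsM_mul_left _ hE)
  have z6 : Eᴴ * E = 0 := epsM_mul_epsM hEh hE
  have z7 : Eᴴ * (B * (P * E)) = 0 :=
    epsM_mul_epsM hEh (epsM_mul_left _ (epsM_mul_left _ hE))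
  have z8 : E * Eᴴ = 0 := epsM_mul_epsM hE hEh
  have z9 : E * (P * (B * Eᴴ)) = 0 :=
    epsM_mul_epsM hE (epsM_mul_left _ (epsM_mul_left _ hEh))
  have z10 : Eᴴ * (E * Bᴴ) = 0 := epsM_mul_epsM hEh (epsM_mul_right hE _)
  have z11 : Eᴴ * (B * Eᴴ) = 0 := epsM_mul_epsM hEh (epsM_mul_left _ hEh)
  set X : Matrix (Fin n) (Fin m) DualComplex := P + F with hXdef
  -- key products
  have c1 : B * F = -(B * (P * (E * P))) + Pᴴ * Eᴴ - Pᴴ * (Eᴴ * (B * P)) := by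
    rw [hFdef]
    simp only [Matrix.mul_add, Matrix.mul_sub, r1c, r3c, r3t]
    abel
  have c2 : F * B = Eᴴ * Pᴴ - P * (B * (Eᴴ * Pᴴ)) - P * (E * (P * B)) := by
    rw [hFdef]
    simp only [Matrix.add_mul, Matrix.sub_mul, Matrix.mul_assoc, r4t, r1t]
    abel
  have cAX : A * X = B * P + E * P - B * (P * (E * P)) + Pᴴ * Eᴴ
      - Pᴴ * (Eᴴ * (B * P)) := by
    rw [hA, hXdef]
    simp only [Matrix.add_mul, Matrix.mul_add, z1, add_zero, c1]
    abel
  have cXA : X * A = P * B + P * E + Eᴴ * Pᴴ - P * (B * (Eᴴ * Pᴴ))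
      - P * (E * (P * B)) := by
    rw [hA, hXdef]
    simp only [Matrix.add_mul, Matrix.mul_add, z2, add_zero, c2]
    abel
  have hPBF : P * (B * F) = -(P * (E * P)) + P * (Pᴴ * Eᴴ)
      - P * (Pᴴ * (Eᴴ * (B * P))) := by
    rw [c1]
    simp only [Matrix.mul_add, Matrix.mul_sub, Matrix.mul_neg, r2c]
  refine ⟨X, ?_, ?_, ?_, ?_⟩
  · -- first condition
    have cAXA : A * X * A = B + (B * (P * E) + E * (P * B)
        - B * (P * (E * (P * B)))) := by
      rw [cAX, hA]
      simp only [Matrix.add_mul, Matrix.sub_mul, Matrix.mul_add, Matrix.mul_sub,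
        Matrix.neg_mul, Matrix.mul_neg, Matrix.mul_assoc, r1t, z5, z6, z7,
        Matrix.mul_zero, Matrix.zero_mul, add_zero, zero_add, sub_zero]
      abel
    have cAXAAh : (A * X * A) * Aᴴ = B * Bᴴ + E * Bᴴ + B * Eᴴ := by
      rw [cAXA]
      nth_rewrite 1 [hA]
      simp only [Matrix.conjTranspose_add, Matrix.add_mul, Matrix.sub_mul,
        Matrix.mul_add, Matrix.mul_sub, Matrix.mul_assoc, r6t, z8, z9,
        Matrix.mul_zero, Matrix.zero_mul, add_zero, zero_add, sub_zero]
      abel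
    calc Aᴴ * A * X * A * Aᴴ = Aᴴ * ((A * X * A) * Aᴴ) := by
          simp only [Matrix.mul_assoc]
      _ = Aᴴ * (A * Aᴴ) := by
          rw [cAXAAh, hA]
          simp only [Matrix.conjTranspose_add, Matrix.add_mul, Matrix.mul_add,
            Matrix.mul_assoc, z8, z10, z11, Matrix.mul_zero, Matrix.zero_mul,
            add_zero, zero_add]
      _ = Aᴴ * A * Aᴴ := by rw [Matrix.mul_assoc]
  · -- second condition
    rw [cXA, hXdef]
    simp only [Matrix.add_mul, Matrix.sub_mul, Matrix.mul_add, Matrix.mul_sub,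
      Matrix.neg_mul, Matrix.mul_neg, Matrix.mul_assoc, z1, z3, z4,
      r2t, Matrix.mul_zero, Matrix.zero_mul, add_zero, zero_add, sub_zero]
    simp only [hPBF, r2t]
    rw [hFdef]
    abel
  · -- third condition
    rw [cAX]
    simp only [Matrix.conjTranspose_add, Matrix.conjTranspose_sub,
      Matrix.conjTranspose_mul, Matrix.conjTranspose_conjTranspose,
      Matrix.mul_assoc, l3c, l3', l4c, l4']
    abel
  · -- fourth condition
    rw [cXA]
    simp only [Matrix.conjTranspose_add, Matrix.conjTranspose_sub,
      Matrix.conjTranspose_mul, Matrix.conjTranspose_conjTranspose,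
      Matrix.mul_assoc, l3c, l3', l4c, l4']
    abel
end
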